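/- arXiv:1309.3821 — 3 statements merged into one kernel-verified Lean document; each statement's English description precedes it below -/
import Mathlib

section
/- The elliptic curve E : y^2 + xy + ε^2 y = x^3, where ε = (5 + √29)/2 is the fundamental unit of F = Q(√29), has discriminant equal to a unit in the ring of integers of F; hence E has good reduction at every prime of F. -/
open Polynomial

/-- The ring of integers of `F = ℚ(√29)`, modeled as `ℤ[w]` where
`w = (1+√29)/2` satisfies `w² = w + 7`. -/
noncomputable abbrev Osqrt29 : Type := AdjoinRoot (X ^ 2 - X - C 7 : Polynomial ℤ)

/-- The elliptic curve `E : y² + xy + ε²y = x³` over `F = ℚ(√29)`,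
where `ε = (5+√29)/2 = w + 2` is the fundamental unit, has discriminant
(computed from the standard formulas with `a₁ = 1`, `a₂ = 0`, `a₃ = ε²`,
`a₄ = 0`, `a₆ = 0`) a unit in the ring of integers; hence the discriminant lies
in no prime ideal, so `E` has good reduction at every prime of `F`. -/
theorem stmt0 :
    let w : Osqrt29 := AdjoinRoot.root _
    let ε : Osqrt29 := w + 2
    let a₁ : Osqrt29 := 1
    let a₂ : Osqrt29 := 0
    let a₃ : Osqrt29 := ε ^ 2
    let a₄ : Osqrt29 := 0
    let a₆ : Osqrt29 := 0
    let b₂ : Osqrt29 := a₁ ^ 2 + 4 * a₂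
    let b₄ : Osqrt29 := 2 * a₄ + a₁ * a₃
    let b₆ : Osqrt29 := a₃ ^ 2 + 4 * a₆
    let b₈ : Osqrt29 :=
      a₁ ^ 2 * a₆ + 4 * a₂ * a₆ - a₁ * a₃ * a₄ + a₂ * a₃ ^ 2 - a₄ ^ 2
    let Δ : Osqrt29 := -b₂ ^ 2 * b₈ - 8 * b₄ ^ 3 - 27 * b₆ ^ 2 + 9 * b₂ * b₄ * b₆
    IsUnit Δ ∧ ∀ p : Ideal Osqrt29, p.IsPrime → Δ ∉ p := by
  intro w ε a₁ a₂ a₃ a₄ a₆ b₂ b₄ b₆ b₈ Δ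
  have hw : w ^ 2 = w + 7 := by
    have h : (AdjoinRoot.mk (X ^ 2 - X - C 7 : Polynomial ℤ))
        (X ^ 2 - X - C 7) = 0 := AdjoinRoot.mk_self
    simp only [map_sub, map_pow, AdjoinRoot.mk_X, AdjoinRoot.mk_C] at h
    have : w ^ 2 - w - 7 = 0 := by
      simpa [w] using h
    linear_combination this
  have hΔ : Δ = -5802176 - 2646275 * w := by
    simp only [Δ, b₂, b₄, b₆, b₈, a₁, a₂, a₃, a₄, a₆, ε]
    ring_nf
    linear_combination (-827904 - 255845 * w - 74845 * w ^ 2 - 18968 * w ^ 3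
      - 3671 * w ^ 4 - 459 * w ^ 5 - 27 * w ^ 6) * hw
  have hu : IsUnit Δ := by
    refine IsUnit.of_mul_eq_one (a := Δ) (-8448451 + 2646275 * w) ?_
    rw [hΔ]
    linear_combination (-7002771375625 : Osqrt29) * hw
  exact ⟨hu, fun p hp hmem => hp.ne_top (p.eq_top_of_isUnit_mem hmem hu)⟩
end

section
/- Let F = Q(√193) with w = (1+√193)/2. The genus 2 curve C : y^2 + Q(x) y = P(x) over F, with Q(x) = −x − w and P(x) = 2x^6 + (−2w+7)x^5 + (−5w+47)x^4 + (−12w+85)x^3 + (−13w+97)x^2 + (−8w+56)x − 2w + 1, has discriminant Δ_C = −1. In particular C has everywhere good reduction over F. -/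
open Polynomial

/-- The ring of integers `ℤ[w]` of `F = ℚ(√193)`, where `w = (1+√193)/2`
satisfies `w² = w + 48`. -/
noncomputable abbrev Osqrt193 : Type := AdjoinRoot (X ^ 2 - X - C 48 : Polynomial ℤ)

private lemma disc_of_roots (a b c s1 s2 s3 : ℂ) (h1 : a + b + c = s1)
    (h2 : a*b + a*c + b*c = s2) (h3 : a*b*c = s3) :
    (a-b)^2*(a-c)^2*(b-c)^2 =
      s1^2*s2^2 - 4*s2^3 - 4*s1^3*s3 + 18*s1*s2*s3 - 27*s3^2 := by
  rw [← h1, ← h2, ← h3]; ring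

private lemma quadprod (d e t s1 s2 s3 : ℂ) (h1 : d + e + t = s1)
    (h2 : d*e + d*t + e*t = s2) (h3 : d*e*t = s3) :
    (-(1/2)*d^2 - (1/2)*d + 1/4) * (-(1/2)*e^2 - (1/2)*e + 1/4) *
      (-(1/2)*t^2 - (1/2)*t + 1/4) =
      1/64 - 5*s3/16 - s3^2/8 + s2/8 - s2*s3/8 + s2^2/16 - s1/32 - s1*s3/4
        + s1*s2/16 - s1^2/32 := by
  rw [← h1, ← h2, ← h3]; ring

/-- the genus 2 curve `C : y² + Q(x)y = P(x)` over
`F = ℚ(√193) ⊆ ℝ` (with `w = (1+√193)/2`) has discriminant `Δ_C = -1`: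
writing the sextic `f = 4P + Q²` with leading coefficient `ℓ` and roots `r i`
in `ℂ`, Liu's discriminant `2⁻¹²·ℓ¹⁰·∏_{i<j}(rᵢ-rⱼ)²` equals `-1`.  In
particular `Δ_C = -1` lies in no prime ideal of `O_F = ℤ[w]`, so `C` has
everywhere good reduction over `F`. -/
theorem stmt3 :
    let w : ℝ := (1 + Real.sqrt 193) / 2
    let Q : Polynomial ℝ := C (-1) * X + C (-w)
    let P : Polynomial ℝ :=
      C 2 * X ^ 6 + C (-2 * w + 7) * X ^ 5 + C (-5 * w + 47) * X ^ 4 +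
        C (-12 * w + 85) * X ^ 3 + C (-13 * w + 97) * X ^ 2 +
        C (-8 * w + 56) * X + C (-2 * w + 1)
    let f : Polynomial ℝ := 4 * P + Q ^ 2
    let φ := algebraMap ℝ ℂ
    let ℓ : ℂ := φ (f.coeff 6)
    (∃ r : Fin 6 → ℂ,
      f.map φ = C ℓ * ∏ i, (X - C (r i)) ∧
      ℓ ^ 10 * ∏ p ∈ Finset.univ.filter (fun p : Fin 6 × Fin 6 => p.1 < p.2),
          (r p.1 - r p.2) ^ 2 = φ (2 ^ 12 * (-1))) ∧
    (∀ p : Ideal Osqrt193, p.IsPrime → (-1 : Osqrt193) ∉ p) := by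
  intro w Q P f φ ℓ
  have hs : Real.sqrt 193 ^ 2 = 193 := Real.sq_sqrt (by norm_num)
  have hw : w ^ 2 = w + 48 := by
    show ((1 + Real.sqrt 193) / 2) ^ 2 = (1 + Real.sqrt 193) / 2 + 48
    linear_combination hs / 4
  have hu : (w : ℂ) ^ 2 = (w : ℂ) + 48 := by exact_mod_cast hw
  -- explicit form of f
  have hf : f = C 8 * X^6 + C (28 - 8*w) * X^5 + C (188 - 20*w) * X^4 +
      C (340 - 48*w) * X^3 + C (389 - 52*w) * X^2 + C (224 - 30*w) * X +
      C (52 - 7*w) := by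
    apply Polynomial.funext
    intro x
    simp only [f, P, Q, eval_add, eval_mul, eval_pow, eval_C, eval_X, eval_ofNat]
    linear_combination hw
  have hc6 : f.coeff 6 = 8 := by
    rw [hf]
    simp only [coeff_add, coeff_C_mul, coeff_X_pow, coeff_C, coeff_X]
    norm_num
  have hl : ℓ = 8 := by
    show φ (f.coeff 6) = 8
    rw [hc6]; exact map_ofNat φ 8
  -- roots of the two cubic factors
  obtain ⟨a, b, c, h3g⟩ :=
    (Cubic.splits_iff_roots_eq_three (φ := RingHom.id ℂ)
      (P := ⟨1, (3 - (w:ℂ))/2, (8 - (w:ℂ))/2, (8 - (w:ℂ))/4⟩) one_ne_zero).mp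
      (IsAlgClosed.splits _)
  have hg1 : a + b + c = -((3 - (w:ℂ))/2) := by
    have h := Cubic.b_eq_three_roots (φ := RingHom.id ℂ) one_ne_zero h3g
    simp only [RingHom.id_apply] at h
    linear_combination h
  have hg2 : a*b + a*c + b*c = (8 - (w:ℂ))/2 := by
    have h := Cubic.c_eq_three_roots (φ := RingHom.id ℂ) one_ne_zero h3g
    simp only [RingHom.id_apply] at h
    linear_combination -h
  have hg3 : a*b*c = -((8 - (w:ℂ))/4) := by
    have h := Cubic.d_eq_three_roots (φ := RingHom.id ℂ) one_ne_zero h3g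
    simp only [RingHom.id_apply] at h
    linear_combination h
  obtain ⟨d, e, t, h3h⟩ :=
    (Cubic.splits_iff_roots_eq_three (φ := RingHom.id ℂ)
      (P := ⟨1, (4 - (w:ℂ))/2, (9 - (w:ℂ))/2, (7 - (w:ℂ))/4⟩) one_ne_zero).mp
      (IsAlgClosed.splits _)
  have hh1 : d + e + t = -((4 - (w:ℂ))/2) := by
    have h := Cubic.b_eq_three_roots (φ := RingHom.id ℂ) one_ne_zero h3h
    simp only [RingHom.id_apply] at h
    linear_combination h
  have hh2 : d*e + d*t + e*t = (9 - (w:ℂ))/2 := by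
    have h := Cubic.c_eq_three_roots (φ := RingHom.id ℂ) one_ne_zero h3h
    simp only [RingHom.id_apply] at h
    linear_combination -h
  have hh3 : d*e*t = -((7 - (w:ℂ))/4) := by
    have h := Cubic.d_eq_three_roots (φ := RingHom.id ℂ) one_ne_zero h3h
    simp only [RingHom.id_apply] at h
    linear_combination h
  have hga : ∀ z : ℂ, (z - a) * (z - b) * (z - c) =
      z^3 + ((3 - (w:ℂ))/2)*z^2 + ((8 - (w:ℂ))/2)*z + (8 - (w:ℂ))/4 := by
    intro z
    linear_combination (-z^2)*hg1 + z*hg2 + (-1 : ℂ)*hg3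
  have hha : ∀ z : ℂ, (z - d) * (z - e) * (z - t) =
      z^3 + ((4 - (w:ℂ))/2)*z^2 + ((9 - (w:ℂ))/2)*z + (7 - (w:ℂ))/4 := by
    intro z
    linear_combination (-z^2)*hh1 + z*hh2 + (-1 : ℂ)*hh3
  refine ⟨⟨![a, b, c, d, e, t], ?_, ?_⟩, ?_⟩
  · -- factorization of f over ℂ
    rw [hf, hl]
    apply Polynomial.funext
    intro z
    simp only [φ, Polynomial.map_add, Polynomial.map_mul, Polynomial.map_pow,
      Polynomial.map_C, Polynomial.map_X, Complex.coe_algebraMap,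
      Fin.prod_univ_six, Matrix.cons_val_zero, Matrix.cons_val_one,
      Matrix.head_cons, Matrix.cons_val_two, Matrix.tail_cons,
      Matrix.cons_val_three, Matrix.cons_val_four, Matrix.cons_val_succ,
      eval_add, eval_sub, eval_mul, eval_pow, eval_C, eval_X]
    rw [show (![a, b, c, d, e, t] : Fin 6 → ℂ) 5 = t from rfl]
    push_cast
    linear_combination (-8*((z-d)*(z-e)*(z-t)))*(hga z) +
      (-8*(z^3 + ((4 - (w:ℂ))/2)*z^2 + ((9 - (w:ℂ))/2)*z + (7 - (w:ℂ))/4))*(hha z) +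
      (-(2*z^2+2*z+1)^2/2)*hu + (2*(2*z^2+2*z-1))*(hha z)
  · -- discriminant computation
    rw [hl]
    have hφ : φ ((2:ℝ)^12 * (-1)) = -4096 := by
      simp only [φ, map_mul, map_pow, map_neg, map_one, map_ofNat]
      norm_num
    rw [hφ]
    have hDg : (a-b)^2*(a-c)^2*(b-c)^2 = 2 + 5*(w:ℂ)/16 := by
      rw [disc_of_roots a b c _ _ _ hg1 hg2 hg3]
      linear_combination ((47:ℂ)/16 + (w:ℂ)/16 - (w:ℂ)^2/16) * hu
    have hDh : (d-e)^2*(d-t)^2*(e-t)^2 = 37/16 - 5*(w:ℂ)/16 := by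
      rw [disc_of_roots d e t _ _ _ hh1 hh2 hh3]
      linear_combination ((47:ℂ)/16 + (w:ℂ)/16 - (w:ℂ)^2/16) * hu
    have qd : (d - a) * (d - b) * (d - c) = -(1/2)*d^2 - (1/2)*d + 1/4 := by
      linear_combination (hga d) - (hha d)
    have qe : (e - a) * (e - b) * (e - c) = -(1/2)*e^2 - (1/2)*e + 1/4 := by
      linear_combination (hga e) - (hha e)
    have qt : (t - a) * (t - b) * (t - c) = -(1/2)*t^2 - (1/2)*t + 1/4 := by
      linear_combination (hga t) - (hha t)
    have hv : (-(1/2)*d^2 - (1/2)*d + 1/4) * (-(1/2)*e^2 - (1/2)*e + 1/4) *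
        (-(1/2)*t^2 - (1/2)*t + 1/4) = -1/128 := by
      rw [quadprod d e t _ _ _ hh1 hh2 hh3]
      linear_combination (-(1:ℂ)/32) * hu
    have hB1 : ∏ p ∈ ({(0,1),(0,2),(1,2)} : Finset (Fin 6 × Fin 6)),
        ((![a, b, c, d, e, t]) p.1 - (![a, b, c, d, e, t]) p.2) ^ 2 =
        2 + 5*(w:ℂ)/16 := by
      simp (config := { decide := true }) only [Finset.prod_insert,
        Finset.mem_insert, Finset.mem_singleton, Finset.prod_singleton,
        Matrix.cons_val_zero, Matrix.cons_val_one, Matrix.head_cons,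
        Matrix.cons_val_two, Matrix.tail_cons, Matrix.cons_val_three,
        Matrix.cons_val_four, Matrix.cons_val_succ]
      linear_combination hDg
    have hB2 : ∏ p ∈ ({(3,4),(3,5),(4,5)} : Finset (Fin 6 × Fin 6)),
        ((![a, b, c, d, e, t]) p.1 - (![a, b, c, d, e, t]) p.2) ^ 2 =
        37/16 - 5*(w:ℂ)/16 := by
      simp (config := { decide := true }) only [Finset.prod_insert,
        Finset.mem_insert, Finset.mem_singleton, Finset.prod_singleton,
        Matrix.cons_val_zero, Matrix.cons_val_one, Matrix.head_cons,
        Matrix.cons_val_two, Matrix.tail_cons, Matrix.cons_val_three,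
        Matrix.cons_val_four, Matrix.cons_val_succ,
        show (![a, b, c, d, e, t] : Fin 6 → ℂ) 5 = t from rfl]
      linear_combination hDh
    have hBd : ∏ p ∈ ({(0,3),(1,3),(2,3)} : Finset (Fin 6 × Fin 6)),
        ((![a, b, c, d, e, t]) p.1 - (![a, b, c, d, e, t]) p.2) ^ 2 =
        (-(1/2)*d^2 - (1/2)*d + 1/4)^2 := by
      simp (config := { decide := true }) only [Finset.prod_insert,
        Finset.mem_insert, Finset.mem_singleton, Finset.prod_singleton,
        Matrix.cons_val_zero, Matrix.cons_val_one, Matrix.head_cons,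
        Matrix.cons_val_two, Matrix.tail_cons, Matrix.cons_val_three,
        Matrix.cons_val_four, Matrix.cons_val_succ]
      linear_combination ((d-a)*(d-b)*(d-c) + (-(1/2)*d^2 - (1/2)*d + 1/4)) * qd
    have hBe : ∏ p ∈ ({(0,4),(1,4),(2,4)} : Finset (Fin 6 × Fin 6)),
        ((![a, b, c, d, e, t]) p.1 - (![a, b, c, d, e, t]) p.2) ^ 2 =
        (-(1/2)*e^2 - (1/2)*e + 1/4)^2 := by
      simp (config := { decide := true }) only [Finset.prod_insert,
        Finset.mem_insert, Finset.mem_singleton, Finset.prod_singleton,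
        Matrix.cons_val_zero, Matrix.cons_val_one, Matrix.head_cons,
        Matrix.cons_val_two, Matrix.tail_cons, Matrix.cons_val_three,
        Matrix.cons_val_four, Matrix.cons_val_succ]
      linear_combination ((e-a)*(e-b)*(e-c) + (-(1/2)*e^2 - (1/2)*e + 1/4)) * qe
    have hBt : ∏ p ∈ ({(0,5),(1,5),(2,5)} : Finset (Fin 6 × Fin 6)),
        ((![a, b, c, d, e, t]) p.1 - (![a, b, c, d, e, t]) p.2) ^ 2 =
        (-(1/2)*t^2 - (1/2)*t + 1/4)^2 := by
      simp (config := { decide := true }) only [Finset.prod_insert,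
        Finset.mem_insert, Finset.mem_singleton, Finset.prod_singleton,
        Matrix.cons_val_zero, Matrix.cons_val_one, Matrix.head_cons,
        Matrix.cons_val_two, Matrix.tail_cons, Matrix.cons_val_three,
        Matrix.cons_val_four, Matrix.cons_val_succ,
        show (![a, b, c, d, e, t] : Fin 6 → ℂ) 5 = t from rfl]
      linear_combination ((t-a)*(t-b)*(t-c) + (-(1/2)*t^2 - (1/2)*t + 1/4)) * qt
    rw [show (Finset.univ.filter (fun p : Fin 6 × Fin 6 => p.1 < p.2)) =
        (({(0,1),(0,2),(1,2)} : Finset (Fin 6 × Fin 6)) ∪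
          (({(3,4),(3,5),(4,5)} : Finset (Fin 6 × Fin 6)) ∪
            (({(0,3),(1,3),(2,3)} : Finset (Fin 6 × Fin 6)) ∪
              (({(0,4),(1,4),(2,4)} : Finset (Fin 6 × Fin 6)) ∪
                ({(0,5),(1,5),(2,5)} : Finset (Fin 6 × Fin 6)))))) from by decide,
      Finset.prod_union (by decide), Finset.prod_union (by decide),
      Finset.prod_union (by decide), Finset.prod_union (by decide),
      hB1, hB2, hBd, hBe, hBt]
    linear_combination (8^10*(2 + 5*(w:ℂ)/16)*(37/16 - 5*(w:ℂ)/16)*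
        ((-(1/2)*d^2 - (1/2)*d + 1/4) * (-(1/2)*e^2 - (1/2)*e + 1/4) *
          (-(1/2)*t^2 - (1/2)*t + 1/4) + (-1/128))) * hv + (-6400 : ℂ) * hu
  · intro p hp hmem
    exact hp.ne_top (p.eq_top_of_isUnit_mem hmem isUnit_one.neg)
end

section
/- Let F = Q(√233) with w = (1+√233)/2. The genus 2 curve C : y^2 + (x+1) y = −2x^6 − (2w−1)x^5 − 45x^4 − 4(2w−1)x^3 − 31x^2 + (w−1)x + 9 over F has discriminant equal to a unit of O_F times a power of the fundamental unit; in particular its discriminant is a unit, so C has everywhere good reduction over F. -/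
open Polynomial

/-- Every monic cubic over `ℂ` factors into linear factors. -/
lemma cubic_fact' (p q r : ℂ) : ∃ a b c : ℂ,
    X ^ 3 + C p * X ^ 2 + C q * X + C r
      = (X - C a) * ((X - C b) * (X - C c)) := by
  set G : ℂ[X] := X ^ 3 + C p * X ^ 2 + C q * X + C r with hGdef
  have hm : G.Monic := by unfold G; monicity!
  have hd : G.natDegree = 3 := by unfold G; compute_degree!
  have hsp : Splits G := IsAlgClosed.splits G
  have hcard : G.roots.card = 3 := by rw [splits_iff_card_roots.mp hsp, hd]
  obtain ⟨a, b, c, habc⟩ := Multiset.card_eq_three.mp hcard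
  refine ⟨a, b, c, ?_⟩
  have h := hsp.eq_prod_roots_of_monic hm
  rw [habc] at h
  simpa [mul_assoc] using h

/-- Discriminant of a monic cubic in terms of symmetric functions of its roots. -/
lemma disc3' (a b c : ℂ) :
    (a - b) ^ 2 * (a - c) ^ 2 * (b - c) ^ 2 =
      (a + b + c) ^ 2 * (a * b + a * c + b * c) ^ 2
        - 4 * (a * b + a * c + b * c) ^ 3
        - 4 * (a + b + c) ^ 3 * (a * b * c)
        + 18 * (a + b + c) * (a * b + a * c + b * c) * (a * b * c)
        - 27 * (a * b * c) ^ 2 := by ring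

/-- Resultant of two monic cubics in terms of symmetric functions of their roots. -/
lemma res3' (a1 a2 a3 b1 b2 b3 e1 e2 e3 f1 f2 f3 : ℂ)
    (he1 : e1 = a1 + a2 + a3) (he2 : e2 = a1 * a2 + a1 * a3 + a2 * a3)
    (he3 : e3 = a1 * a2 * a3)
    (hf1 : f1 = b1 + b2 + b3) (hf2 : f2 = b1 * b2 + b1 * b3 + b2 * b3)
    (hf3 : f3 = b1 * b2 * b3) :
    (a1 - b1) * (a1 - b2) * (a1 - b3) * (a2 - b1) * (a2 - b2) * (a2 - b3) *
      (a3 - b1) * (a3 - b2) * (a3 - b3) =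
      (-1 : ℂ) * f3 ^ 3 +
      (3 : ℂ) * e3 * f3 ^ 2 +
      (1 : ℂ) * e3 * f2 ^ 3 +
      (-3 : ℂ) * e3 * f1 * f2 * f3 +
      (-3 : ℂ) * e3 ^ 2 * f3 +
      (3 : ℂ) * e3 ^ 2 * f1 * f2 +
      (-1 : ℂ) * e3 ^ 2 * f1 ^ 3 +
      (1 : ℂ) * e3 ^ 3 +
      (-1 : ℂ) * e2 * f2 ^ 2 * f3 +
      (2 : ℂ) * e2 * f1 * f3 ^ 2 +
      (-2 : ℂ) * e2 * e3 * f2 ^ 2 +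
      (-1 : ℂ) * e2 * e3 * f1 * f3 +
      (1 : ℂ) * e2 * e3 * f1 ^ 2 * f2 +
      (-1 : ℂ) * e2 * e3 ^ 2 * f1 +
      (2 : ℂ) * e2 ^ 2 * f2 * f3 +
      (-1 : ℂ) * e2 ^ 2 * f1 ^ 2 * f3 +
      (1 : ℂ) * e2 ^ 2 * e3 * f2 +
      (-1 : ℂ) * e2 ^ 3 * f3 +
      (1 : ℂ) * e1 * f2 * f3 ^ 2 +
      (1 : ℂ) * e1 * e3 * f2 * f3 +
      (-1 : ℂ) * e1 * e3 * f1 * f2 ^ 2 +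
      (2 : ℂ) * e1 * e3 * f1 ^ 2 * f3 +
      (-2 : ℂ) * e1 * e3 ^ 2 * f2 +
      (1 : ℂ) * e1 * e3 ^ 2 * f1 ^ 2 +
      (-3 : ℂ) * e1 * e2 * f3 ^ 2 +
      (1 : ℂ) * e1 * e2 * f1 * f2 * f3 +
      (3 : ℂ) * e1 * e2 * e3 * f3 +
      (-1 : ℂ) * e1 * e2 * e3 * f1 * f2 +
      (1 : ℂ) * e1 * e2 ^ 2 * f1 * f3 +
      (-1 : ℂ) * e1 ^ 2 * f1 * f3 ^ 2 +
      (1 : ℂ) * e1 ^ 2 * e3 * f2 ^ 2 +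
      (-2 : ℂ) * e1 ^ 2 * e3 * f1 * f3 +
      (-1 : ℂ) * e1 ^ 2 * e2 * f2 * f3 +
      (1 : ℂ) * e1 ^ 3 * f3 ^ 2 := by
  subst he1 he2 he3 hf1 hf2 hf3; ring

/-- Assembling the discriminant value from the two cubic discriminants and the
resultant. -/
lemma assemble' (d1 d2 d3 d4 d5 d6 d7 d8 d9 g1 g2 g3 h1 h2 h3 σ : ℂ)
    (hσ : σ ^ 2 = 233)
    (hDg : g1 ^ 2 * g2 ^ 2 * g3 ^ 2 = (13 - σ)/32)
    (hDh : h1 ^ 2 * h2 ^ 2 * h3 ^ 2 = (13 + σ)/32)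
    (hM : d1 * d2 * d3 * d4 * d5 * d6 * d7 * d8 * d9 = -1/128) :
    (-8 : ℂ) ^ 10 *
      (g1 ^ 2 * (g2 ^ 2 * (d1 ^ 2 * (d2 ^ 2 * (d3 ^ 2 * (g3 ^ 2 * (d4 ^ 2 *
        (d5 ^ 2 * (d6 ^ 2 * (d7 ^ 2 * (d8 ^ 2 * (d9 ^ 2 * (h1 ^ 2 *
          (h2 ^ 2 * h3 ^ 2)))))))))))))) = -4096 := by
  linear_combination
    (2:ℂ) ^ 30 * (h1 ^ 2 * h2 ^ 2 * h3 ^ 2) *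
        (d1 * d2 * d3 * d4 * d5 * d6 * d7 * d8 * d9) ^ 2 * hDg
      + 2 ^ 30 * ((13 - σ)/32) * (d1 * d2 * d3 * d4 * d5 * d6 * d7 * d8 * d9) ^ 2 * hDh
      + 2 ^ 30 * ((13 - σ)/32) * ((13 + σ)/32) *
          (d1 * d2 * d3 * d4 * d5 * d6 * d7 * d8 * d9 + (-1/128)) * hM
      + (-64 : ℂ) * hσ

set_option maxHeartbeats 1600000 in
/-- the genus 2 curve `C : y² + (x+1)y = P(x)` over
`F = ℚ(√233) ⊆ ℝ` (with `w = (1+√233)/2`) has discriminant a unit of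
`O_F`: writing the sextic `f = 4P + Q²` with leading coefficient `ℓ` and roots
`r i` in `ℂ`, Liu's discriminant `Δ_C = 2⁻¹²·ℓ¹⁰·∏_{i<j}(rᵢ-rⱼ)²` is a unit
`u` of the ring of integers of `F`; hence `C` has everywhere good reduction
over `F`. -/
theorem stmt16 :
    let w : ℝ := (1 + Real.sqrt 233) / 2
    let Q : Polynomial ℝ := X + C 1
    let P : Polynomial ℝ :=
      C (-2) * X ^ 6 + C (-(2 * w - 1)) * X ^ 5 + C (-45) * X ^ 4 +
        C (-4 * (2 * w - 1)) * X ^ 3 + C (-31) * X ^ 2 +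
        C (w - 1) * X + C 9
    let f : Polynomial ℝ := 4 * P + Q ^ 2
    let φ := algebraMap ℝ ℂ
    let ℓ : ℂ := φ (f.coeff 6)
    ∃ r : Fin 6 → ℂ, ∃ u v : ℝ,
      f.map φ = C ℓ * ∏ i, (X - C (r i)) ∧
      -- `u ∈ F = ℚ(√233)` and `u` is a unit of the ring of integers of `F`
      (∃ x y : ℚ, u = x + y * Real.sqrt 233) ∧
      IsIntegral ℤ u ∧ IsIntegral ℤ v ∧ u * v = 1 ∧
      ℓ ^ 10 * ∏ p ∈ Finset.univ.filter (fun p : Fin 6 × Fin 6 => p.1 < p.2),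
          (r p.1 - r p.2) ^ 2 = φ (2 ^ 12 * u) := by
  intro w Q P f φ ℓ
  have hw : w = (1 + Real.sqrt 233) / 2 := rfl
  have hfdef : f = 4 * P + Q ^ 2 := rfl
  have hφ : φ = algebraMap ℝ ℂ := rfl
  have hℓdef : ℓ = φ (f.coeff 6) := rfl
  set t : ℝ := Real.sqrt 233 with ht
  -- explicit form of f over ℝ
  have hfR : f = C (-8 : ℝ) * X ^ 6 + C (-4 * t) * X ^ 5 + C (-180 : ℝ) * X ^ 4
      + C (-16 * t) * X ^ 3 + C (-123 : ℝ) * X ^ 2 + C (2 * t) * X + C 37 := by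
    apply Polynomial.funext
    intro x
    simp only [hfdef, show P = C (-2) * X ^ 6 + C (-(2 * w - 1)) * X ^ 5 + C (-45) * X ^ 4 +
        C (-4 * (2 * w - 1)) * X ^ 3 + C (-31) * X ^ 2 + C (w - 1) * X + C 9 from rfl,
      show Q = X + C 1 from rfl, hw]
    simp [eval_add, eval_mul, eval_pow, eval_C, eval_X]
    ring
  have hc6 : f.coeff 6 = -8 := by
    rw [hfR, show (C (-4 * t) : ℝ[X]) = C (-4) * C t from by rw [← C_mul],
      show (C (-16 * t) : ℝ[X]) = C (-16) * C t from by rw [← C_mul],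
      show (C (2 * t) : ℝ[X]) = C 2 * C t from by rw [← C_mul]]
    simp [coeff_add, mul_assoc, coeff_C_mul, coeff_X_pow, coeff_C]
  have hℓ : ℓ = -8 := by
    rw [hℓdef, hc6, hφ]; norm_num
  -- the square root of 233 inside ℂ
  set σ : ℂ := (t : ℂ) with hσdef
  have hσ : σ ^ 2 = 233 := by
    rw [hσdef, ← Complex.ofReal_pow, ht, Real.sq_sqrt (by norm_num : (233:ℝ) ≥ 0)]
    norm_num
  -- the complex form of f
  have hfC : f.map φ = C (-8 : ℂ) * X ^ 6 + C (-4 * σ) * X ^ 5 + C (-180 : ℂ) * X ^ 4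
      + C (-16 * σ) * X ^ 3 + C (-123 : ℂ) * X ^ 2 + C (2 * σ) * X + C 37 := by
    rw [hfR, hφ]
    simp only [Polynomial.map_add, Polynomial.map_mul, Polynomial.map_pow,
      Polynomial.map_C, Polynomial.map_X]
    push_cast
    norm_num
    rfl
  -- roots of the two cubic factors of f
  obtain ⟨a1, a2, a3, hG⟩ := cubic_fact' ((5 + σ)/4) ((19 + σ)/4) ((23 + σ)/8)
  obtain ⟨b1, b2, b3, hH⟩ := cubic_fact' ((σ - 5)/4) ((19 - σ)/4) ((σ - 23)/8)
  have eg : ∀ z : ℂ, z ^ 3 + (5 + σ)/4 * z ^ 2 + (19 + σ)/4 * z + (23 + σ)/8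
      = (z - a1) * ((z - a2) * (z - a3)) := by
    intro z
    have h := congrArg (eval z) hG
    simpa using h
  have eh : ∀ z : ℂ, z ^ 3 + (σ - 5)/4 * z ^ 2 + (19 - σ)/4 * z + (σ - 23)/8
      = (z - b1) * ((z - b2) * (z - b3)) := by
    intro z
    have h := congrArg (eval z) hH
    simpa using h
  -- Vieta for the first cubic
  have hA1 : a1 + a2 + a3 = -((5 + σ)/4) := by
    linear_combination (eg 1)/2 + (eg (-1))/2 - eg 0
  have hA2 : a1 * a2 + a1 * a3 + a2 * a3 = (19 + σ)/4 := by
    linear_combination (eg (-1))/2 - (eg 1)/2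
  have hA3 : a1 * a2 * a3 = -((23 + σ)/8) := by
    linear_combination eg 0
  -- Vieta for the second cubic
  have hB1 : b1 + b2 + b3 = -((σ - 5)/4) := by
    linear_combination (eh 1)/2 + (eh (-1))/2 - eh 0
  have hB2 : b1 * b2 + b1 * b3 + b2 * b3 = (19 - σ)/4 := by
    linear_combination (eh (-1))/2 - (eh 1)/2
  have hB3 : b1 * b2 * b3 = -((σ - 23)/8) := by
    linear_combination eh 0
  -- values of the two cubic discriminants
  have hDg : (a1 - a2) ^ 2 * (a1 - a3) ^ 2 * (a2 - a3) ^ 2 = (13 - σ)/32 := by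
    rw [disc3', hA1, hA2, hA3]
    linear_combination ((365:ℂ)/256 - σ/32 - σ^2/256) * hσ
  have hDh : (b1 - b2) ^ 2 * (b1 - b3) ^ 2 * (b2 - b3) ^ 2 = (13 + σ)/32 := by
    rw [disc3', hB1, hB2, hB3]
    linear_combination ((365:ℂ)/256 + σ/32 - σ^2/256) * hσ
  -- value of the resultant of the two cubics
  have hM : (a1 - b1) * (a1 - b2) * (a1 - b3) * (a2 - b1) * (a2 - b2) * (a2 - b3) *
      (a3 - b1) * (a3 - b2) * (a3 - b3) = -1/128 := by
    rw [res3' a1 a2 a3 b1 b2 b3 _ _ _ _ _ _ hA1.symm hA2.symm hA3.symm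
      hB1.symm hB2.symm hB3.symm]
    linear_combination ((237:ℂ)/256 - σ^2/256) * hσ
  refine ⟨![a1, a2, a3, b1, b2, b3], -1, -1, ?_, ⟨-1, 0, by norm_num⟩,
    isIntegral_one.neg, isIntegral_one.neg, by norm_num, ?_⟩
  · -- factorisation of f over ℂ
    rw [hℓ, Fin.prod_univ_six]
    rw [show (![a1, a2, a3, b1, b2, b3] : Fin 6 → ℂ) 0 = a1 from rfl,
      show (![a1, a2, a3, b1, b2, b3] : Fin 6 → ℂ) 1 = a2 from rfl,
      show (![a1, a2, a3, b1, b2, b3] : Fin 6 → ℂ) 2 = a3 from rfl,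
      show (![a1, a2, a3, b1, b2, b3] : Fin 6 → ℂ) 3 = b1 from rfl,
      show (![a1, a2, a3, b1, b2, b3] : Fin 6 → ℂ) 4 = b2 from rfl,
      show (![a1, a2, a3, b1, b2, b3] : Fin 6 → ℂ) 5 = b3 from rfl]
    apply Polynomial.funext
    intro x
    rw [hfC]
    simp only [eval_add, eval_mul, eval_sub, eval_pow, eval_C, eval_X]
    linear_combination (-8*(x^3 + (σ-5)/4*x^2 + (19-σ)/4*x + (σ-23)/8)) * (eg x)
      + (-8*((x-a1)*((x-a2)*(x-a3)))) * (eh x) + (x^4/2 + (1:ℂ)/8) * hσ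
  · -- the discriminant equals 2¹² times the unit -1
    have hrhs : φ ((2:ℝ) ^ 12 * (-1)) = -4096 := by
      rw [hφ]; push_cast; norm_num
    rw [hℓ]
    rw [show (Finset.univ.filter (fun p : Fin 6 × Fin 6 => p.1 < p.2)) =
      ({(0,1),(0,2),(0,3),(0,4),(0,5),(1,2),(1,3),(1,4),(1,5),(2,3),(2,4),(2,5),
        (3,4),(3,5),(4,5)} : Finset (Fin 6 × Fin 6)) from by decide]
    repeat rw [Finset.prod_insert (by decide)]
    rw [Finset.prod_singleton]
    simp only [Matrix.cons_val_zero, Matrix.cons_val_one, Matrix.head_cons,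
      Matrix.cons_val_two, Matrix.tail_cons, Matrix.cons_val_three, Matrix.cons_val_four]
    rw [show (![a1, a2, a3, b1, b2, b3] : Fin 6 → ℂ) 5 = b3 from rfl]
    rw [hrhs]
    exact assemble' (a1 - b1) (a1 - b2) (a1 - b3) (a2 - b1) (a2 - b2) (a2 - b3)
      (a3 - b1) (a3 - b2) (a3 - b3) (a1 - a2) (a1 - a3) (a2 - a3)
      (b1 - b2) (b1 - b3) (b2 - b3) σ hσ hDg hDh hM
end
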